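/- Let G be a finitely generated group with a finite normal subgroup N such that the quotient G/N is virtually abelian. Then G is virtually abelian. -/

import Mathlib

/-- **Lemma (finite-by-(virtually abelian)).** If a finitely generated group `G` has a
finite normal subgroup `N` with `G/N` virtually abelian, then `G` is virtually
abelian. -/
theorem virtually_abelian_of_finite_by_virtually_abelian {G : Type*} [Group G]
    (hFG : Group.FG G) (N : Subgroup G) [N.Normal] (hN : (N : Set G).Finite)
    (hK : ∃ K : Subgroup (G ⧸ N), K.FiniteIndex ∧ ∀ a ∈ K, ∀ b ∈ K, a * b = b * a) :
    ∃ H : Subgroup G, H.FiniteIndex ∧ ∀ a ∈ H, ∀ b ∈ H, a * b = b * a := by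
  obtain ⟨K, hKfi, hKab⟩ := hK
  set H : Subgroup G := K.comap (QuotientGroup.mk' N) with hH
  have hHfi : H.FiniteIndex := by
    constructor
    rw [hH, Subgroup.index_comap_of_surjective _ (QuotientGroup.mk'_surjective N)]
    exact hKfi.index_ne_zero
  -- commutators of H lie in N
  open scoped commutatorElement in
  have hcomm : ∀ a b : H, ((⁅a, b⁆ : H) : G) ∈ N := by
    intro a b
    have ha : QuotientGroup.mk' N (a : G) ∈ K := a.2
    have hb : QuotientGroup.mk' N (b : G) ∈ K := b.2
    have := hKab _ ha _ hb
    rw [← QuotientGroup.eq_one_iff]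
    show QuotientGroup.mk' N (⁅(a : G), (b : G)⁆) = 1
    rw [map_commutatorElement]
    rw [commutatorElement_eq_one_iff_mul_comm]
    exact this
  haveI : Group.FG H := Subgroup.fg_of_index_ne_zero H
  haveI : Finite (commutatorSet H) := by
    have : (H.subtype '' (commutatorSet H)).Finite := by
      apply hN.subset
      rintro x ⟨y, ⟨a, b, rfl⟩, rfl⟩
      exact hcomm a b
    exact (this.of_finite_image (Set.injOn_of_injective H.subtype_injective)).to_subtype
  refine ⟨(Subgroup.center H).map H.subtype, ?_, ?_⟩
  · constructor
    rw [Subgroup.index_map_subtype]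
    exact Nat.mul_ne_zero (Subgroup.finiteIndex_center (G := H)).index_ne_zero
      hHfi.index_ne_zero
  · rintro a ⟨x, hx, rfl⟩ b ⟨y, hy, rfl⟩
    have := (Subgroup.mem_center_iff.mp hx) y
    simpa only [map_mul] using congrArg H.subtype this.symm
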